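/- Lower bound for 0-1 Rademacher norms: for any E ⊆ [n]×[n], any I ⊆ E with |I| ≤ p, and any p ≥ 1, sup_{‖s‖₂,‖t‖₂≤1} ‖Σ_{(i,j)∈E} ε_{ij} s_i t_j‖_p ≥ (1/2) ‖1_I‖, where ‖1_I‖ is the operator norm of the 0-1 matrix with support I. -/

import Mathlib

open MeasureTheory ProbabilityTheory

lemma stmt11_int_bdd {Ω : Type*} [MeasureSpace Ω] [IsProbabilityMeasure (ℙ : Measure Ω)]
    {f : Ω → ℝ} (hm : Measurable f) {C : ℝ} (h : ∀ ω, |f ω| ≤ C) :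
    Integrable f ℙ :=
  Integrable.mono' (integrable_const C) hm.aestronglyMeasurable
    (Filter.Eventually.of_forall fun ω => by simpa using h ω)

lemma stmt11_eps_int {Ω : Type*} [MeasureSpace Ω] [IsProbabilityMeasure (ℙ : Measure Ω)]
    (e : Ω → ℝ) (hm : Measurable e) (hv : ∀ ω, e ω = 1 ∨ e ω = -1)
    (hs : ℙ {ω | e ω = 1} = 1 / 2) : ∫ ω, e ω = 0 := by
  have hset : MeasurableSet {ω | e ω = 1} := hm (measurableSet_singleton 1)
  have heq : e = fun ω => 2 * Set.indicator {ω | e ω = 1} (fun _ => (1:ℝ)) ω - 1 := by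
    funext ω
    rcases hv ω with h1 | h1
    · simp [Set.indicator_of_mem, h1, Set.mem_setOf_eq]; norm_num
    · have : ω ∉ {ω | e ω = 1} := by simp [Set.mem_setOf_eq, h1]; norm_num [h1]
      simp [Set.indicator_of_notMem this, h1]
  have hind : Integrable (fun ω => Set.indicator {ω | e ω = 1} (fun _ => (1:ℝ)) ω) ℙ :=
    (integrable_const (1:ℝ)).indicator hset
  rw [heq]
  rw [integral_sub ((hind.const_mul 2)) (integrable_const 1)]
  rw [integral_const_mul, integral_indicator_const _ hset, integral_const]
  simp [hs, measureReal_def]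


lemma stmt11_key {Ω : Type*} [MeasureSpace Ω] [IsProbabilityMeasure (ℙ : Measure Ω)]
    {n : ℕ} (E I : Finset (Fin n × Fin n)) (hIE : I ⊆ E)
    (p : ℝ) (hp : 1 ≤ p) (hI : (I.card : ℝ) ≤ p)
    (ε : Fin n × Fin n → Ω → ℝ)
    (hmeas : ∀ q, Measurable (ε q))
    (hindep : iIndepFun ε ℙ)
    (hval : ∀ q ω, ε q ω = 1 ∨ ε q ω = -1)
    (hsym : ∀ q, ℙ {ω | ε q ω = 1} = 1 / 2)
    (u v : Fin n → ℝ) (hu : ∀ i, 0 ≤ u i) (hv : ∀ j, 0 ≤ v j) :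
    (1 / 2) * ∑ e ∈ I, u e.1 * v e.2 ≤
      (∫ ω, |∑ e ∈ E, ε e ω * u e.1 * v e.2| ^ p) ^ (1 / p) := by
  have hp0 : (0:ℝ) < p := lt_of_lt_of_le zero_lt_one hp
  set X : Ω → ℝ := fun ω => ∑ e ∈ E, ε e ω * u e.1 * v e.2 with hX
  set c : ℝ := ∑ e ∈ I, u e.1 * v e.2 with hcdef
  have hc : 0 ≤ c := Finset.sum_nonneg fun e _ => mul_nonneg (hu _) (hv _)
  set A : Set Ω := ⋂ e ∈ I, (ε e) ⁻¹' {1} with hAdef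
  have hA_meas : MeasurableSet A :=
    MeasurableSet.biInter I.countable_toSet fun e _ => hmeas e (measurableSet_singleton 1)
  have hmemA : ∀ ω, ω ∈ A ↔ ∀ e ∈ I, ε e ω = 1 := by
    intro ω; simp [hAdef, Set.mem_iInter]
  -- probability of A
  have hPA : ℙ A = (1/2 : ENNReal) ^ I.card := by
    rw [hAdef, hindep.meas_biInter (fun e _ => ⟨{1}, measurableSet_singleton 1, rfl⟩)]
    rw [Finset.prod_congr rfl (fun e _ => ?_), Finset.prod_const]
    show ℙ ((ε e) ⁻¹' {1}) = 1/2
    rw [← hsym e]; rfl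
  set P : ℝ := (ℙ A).toReal with hPdef
  have hPval : P = (1/2 : ℝ) ^ I.card := by
    rw [hPdef, hPA, ENNReal.toReal_pow]
    norm_num
  have hPpos : 0 < P := by rw [hPval]; positivity
  -- measurability / integrability
  have hXmeas : Measurable X := by
    apply Finset.measurable_sum
    intro e _
    exact ((hmeas e).mul_const _).mul_const _
  have hXbdd : ∀ ω, |X ω| ≤ ∑ e ∈ E, u e.1 * v e.2 := by
    intro ω
    refine (Finset.abs_sum_le_sum_abs _ _).trans (Finset.sum_le_sum fun e _ => ?_)
    rw [abs_mul, abs_mul]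
    rcases hval e ω with h | h <;>
      simp [h, abs_of_nonneg (hu e.1), abs_of_nonneg (hv e.2)]
  have hXint : Integrable X ℙ := stmt11_int_bdd hXmeas hXbdd
  have hXabsint : Integrable (fun ω => |X ω|) ℙ :=
    stmt11_int_bdd hXmeas.abs (C := ∑ e ∈ E, u e.1 * v e.2)
      (fun ω => by rw [abs_abs]; exact hXbdd ω)
  -- integral of each ε e over A
  have hInt_in : ∀ e ∈ I, ∫ ω in A, ε e ω = P := by
    intro e he
    rw [setIntegral_congr_fun hA_meas (g := fun _ => (1:ℝ))
      (fun ω hω => (hmemA ω).1 hω e he)]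
    simp [setIntegral_const, hPdef, measureReal_def]
  have hInt_out : ∀ e ∈ E, e ∉ I → ∫ ω in A, ε e ω = 0 := by
    intro e _ heI
    have hdisj : Disjoint ({e} : Finset (Fin n × Fin n)) I := by
      simp [Finset.disjoint_singleton_left, heI]
    have h1 := hindep.indepFun_finset {e} I hdisj hmeas
    have hsetT : MeasurableSet {w : ↥I → ℝ | ∀ i, w i = 1} := by
      have : {w : ↥I → ℝ | ∀ i, w i = 1}
          = ⋂ i, (fun w => w i) ⁻¹' {1} := by ext w; simp [Set.mem_iInter]
      rw [this]
      exact MeasurableSet.iInter fun i => measurable_pi_apply i (measurableSet_singleton 1)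
    have hφ : Measurable (fun w : ↥({e} : Finset (Fin n × Fin n)) → ℝ =>
        w ⟨e, Finset.mem_singleton_self e⟩) := measurable_pi_apply _
    have hψ : Measurable (fun w : ↥I → ℝ =>
        Set.indicator {w : ↥I → ℝ | ∀ i, w i = 1}
          (fun _ => (1:ℝ)) w) := (measurable_const).indicator hsetT
    have h2 := h1.comp hφ hψ
    have heps : ((fun w : ↥({e} : Finset (Fin n × Fin n)) → ℝ =>
        w ⟨e, Finset.mem_singleton_self e⟩) ∘ (fun a (i : ↥({e} : Finset (Fin n × Fin n))) => ε i a))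
        = ε e := rfl
    have hindic : ((fun w : ↥I → ℝ =>
        Set.indicator {w : ↥I → ℝ | ∀ i, w i = 1}
          (fun _ => (1:ℝ)) w) ∘ (fun a (i : ↥I) => ε i a))
        = fun ω => Set.indicator A (fun _ => (1:ℝ)) ω := by
      funext ω
      show Set.indicator {w : ↥I → ℝ | ∀ i, w i = 1} (fun _ => (1:ℝ))
        (fun i : ↥I => ε i ω) = Set.indicator A (fun _ => (1:ℝ)) ω
      by_cases hω : ω ∈ A
      · rw [Set.indicator_of_mem hω]
        have hmem : (fun i : ↥I => ε i ω) ∈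
            {w : ↥I → ℝ | ∀ i, w i = 1} :=
          fun i => (hmemA ω).1 hω i i.2
        exact Set.indicator_of_mem hmem _
      · rw [Set.indicator_of_notMem hω]
        have hmem : (fun i : ↥I => ε i ω) ∉
            {w : ↥I → ℝ | ∀ i, w i = 1} := by
          intro hcon
          exact hω ((hmemA ω).2 fun e' he' => hcon ⟨e', he'⟩)
        exact Set.indicator_of_notMem hmem _
    rw [heps, hindic] at h2
    have hεint : Integrable (ε e) ℙ :=
      stmt11_int_bdd (hmeas e) (C := 1) (fun ω => by rcases hval e ω with h | h <;> simp [h])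
    have hiint : Integrable (fun ω => Set.indicator A (fun _ => (1:ℝ)) ω) ℙ :=
      (integrable_const (1:ℝ)).indicator hA_meas
    have hmul := IndepFun.integral_mul_eq_mul_integral h2 hεint.aestronglyMeasurable hiint.aestronglyMeasurable
    have hzero : ∫ ω, ε e ω = 0 := stmt11_eps_int (ε e) (hmeas e) (hval e) (hsym e)
    have : ∫ ω in A, ε e ω = ∫ ω, ε e ω * Set.indicator A (fun _ => (1:ℝ)) ω := by
      rw [← integral_indicator hA_meas]
      congr 1; funext ω
      by_cases hω : ω ∈ A <;>
        simp [Set.indicator_of_mem, Set.indicator_of_notMem, hω]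
    rw [this]
    show integral ℙ (ε e * fun ω => Set.indicator A (fun _ => (1:ℝ)) ω) = 0
    rw [hmul, hzero, zero_mul]
  -- integral of X over A
  have hXA : ∫ ω in A, X ω = P * c := by
    rw [hX]
    simp_rw [mul_assoc]
    rw [integral_finset_sum E (fun e _ => ((stmt11_int_bdd (hmeas e) (C := 1)
      (fun ω => by rcases hval e ω with h | h <;> simp [h])).restrict.mul_const _))]
    simp_rw [integral_mul_const]
    rw [← Finset.sum_sdiff hIE]
    rw [Finset.sum_congr rfl (fun e he => by
      rw [hInt_out e (Finset.mem_sdiff.1 he).1 (Finset.mem_sdiff.1 he).2, zero_mul])]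
    rw [Finset.sum_const, smul_zero, zero_add]
    rw [Finset.sum_congr rfl (fun e he => by rw [hInt_in e he])]
    rw [← Finset.mul_sum]
  -- P * c ≤ ∫_A |X|
  have hstep : P * c ≤ ∫ ω in A, |X ω| := by
    rw [← hXA]
    exact integral_mono hXint.restrict hXabsint.restrict fun ω => le_abs_self _
  have hhalf : (1/2 : ℝ) * c ≤ P ^ (1/p) * c := by
    have h1 : P ^ (1/p) = (1/2:ℝ) ^ ((I.card : ℝ) / p) := by
      rw [hPval, ← Real.rpow_natCast (1/2:ℝ) I.card, ← Real.rpow_mul (by norm_num)]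
      ring_nf
    have h2 : (1/2:ℝ) ^ (1:ℝ) ≤ (1/2:ℝ) ^ ((I.card:ℝ)/p) :=
      Real.rpow_le_rpow_of_exponent_ge (by norm_num) (by norm_num) ((div_le_one hp0).2 hI)
    rw [Real.rpow_one] at h2
    rw [h1]
    exact mul_le_mul_of_nonneg_right h2 hc
  refine hhalf.trans ?_
  rcases eq_or_lt_of_le hp with hp1 | hp1
  · -- p = 1
    subst hp1
    rw [show (1:ℝ)/1 = 1 by norm_num, Real.rpow_one]
    simp only [Real.rpow_one]
    exact hstep.trans (setIntegral_le_integral hXabsint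
      (Filter.Eventually.of_forall fun ω => abs_nonneg (X ω)))
  · -- 1 < p
    set q : ℝ := Real.conjExponent p with hqdef
    have conj : p.HolderConjugate q := Real.HolderConjugate.conjExponent hp1
    set g : Ω → ℝ := fun ω => Set.indicator A (fun _ => (1:ℝ)) ω with hgdef
    have hgmeas : Measurable g := measurable_const.indicator hA_meas
    have hfmem : MemLp (fun ω => |X ω|) (ENNReal.ofReal p) ℙ :=
      MemLp.of_bound hXmeas.abs.aestronglyMeasurable (∑ e ∈ E, u e.1 * v e.2)
        (Filter.Eventually.of_forall fun ω => by
          rw [Real.norm_eq_abs, abs_abs]; exact hXbdd ω)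
    have hgmem : MemLp g (ENNReal.ofReal q) ℙ :=
      MemLp.of_bound hgmeas.aestronglyMeasurable 1
        (Filter.Eventually.of_forall fun ω => by
          rw [Real.norm_eq_abs, hgdef]
          by_cases hω : ω ∈ A <;>
            simp [Set.indicator_of_mem, Set.indicator_of_notMem, hω])
    have hold := integral_mul_le_Lp_mul_Lq_of_nonneg conj
      (Filter.Eventually.of_forall fun ω => abs_nonneg (X ω))
      (Filter.Eventually.of_forall fun ω => Set.indicator_nonneg (fun _ _ => zero_le_one) ω)
      hfmem hgmem
    have hL : ∫ ω, |X ω| * g ω = ∫ ω in A, |X ω| := by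
      rw [← integral_indicator hA_meas]
      congr 1; funext ω
      by_cases hω : ω ∈ A <;>
        simp [Set.indicator_of_mem, Set.indicator_of_notMem, hω, hgdef]
    have hgq : (fun ω => g ω ^ q) = g := by
      funext ω
      rw [hgdef]
      by_cases hω : ω ∈ A
      · simp [Set.indicator_of_mem hω, Real.one_rpow]
      · simp [Set.indicator_of_notMem hω, Real.zero_rpow conj.symm.pos.ne']
    have hgint : ∫ ω, g ω = P := by
      rw [hgdef, integral_indicator_const _ hA_meas, smul_eq_mul, mul_one, measureReal_def, hPdef]
    rw [hL] at hold
    have hold2 : P * c ≤ (∫ ω, |X ω| ^ p) ^ (1/p) * P ^ (1/q) := by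
      refine (hstep.trans hold).trans_eq' ?_ |>.trans_eq ?_
      · rfl
      · congr 1
        rw [show (fun a => g a ^ q) = fun ω => g ω ^ q from rfl]
        rw [hgq, hgint]
    have hsplit : P = P ^ (1/p) * P ^ (1/q) := by
      rw [← Real.rpow_add hPpos]
      rw [show 1/p + 1/q = 1 by rw [one_div, one_div]; exact conj.inv_add_inv_eq_one]
      rw [Real.rpow_one]
    have hqpos : (0:ℝ) < P ^ (1/q) := Real.rpow_pos_of_pos hPpos _
    have h3 : (P ^ (1/p) * c) * P ^ (1/q) ≤ ((∫ ω, |X ω| ^ p) ^ (1/p)) * P ^ (1/q) := by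
      calc (P ^ (1/p) * c) * P ^ (1/q) = (P ^ (1/p) * P ^ (1/q)) * c := by ring
        _ = P * c := by rw [← hsplit]
        _ ≤ _ := hold2
    exact le_of_mul_le_mul_right h3 hqpos

theorem stmt11
    {Ω : Type*} [MeasureSpace Ω] [IsProbabilityMeasure (ℙ : Measure Ω)]
    {n : ℕ} (E I : Finset (Fin n × Fin n)) (hIE : I ⊆ E)
    (p : ℝ) (hp : 1 ≤ p) (hI : (I.card : ℝ) ≤ p)
    (ε : Fin n × Fin n → Ω → ℝ)
    (hmeas : ∀ q, Measurable (ε q))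
    (hindep : iIndepFun ε ℙ)
    (hval : ∀ q ω, ε q ω = 1 ∨ ε q ω = -1)
    (hsym : ∀ q, ℙ {ω | ε q ω = 1} = 1 / 2) :
    (1 / 2) * sSup {y | ∃ s t : Fin n → ℝ, ∑ i, s i ^ 2 ≤ 1 ∧ ∑ j, t j ^ 2 ≤ 1 ∧
        y = |∑ e ∈ I, s e.1 * t e.2|} ≤
      sSup {x | ∃ s t : Fin n → ℝ, ∑ i, s i ^ 2 ≤ 1 ∧ ∑ j, t j ^ 2 ≤ 1 ∧
        x = (∫ ω, |∑ e ∈ E, ε e ω * s e.1 * t e.2| ^ p) ^ (1 / p)} := by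
  have hp0 : (0:ℝ) < p := lt_of_lt_of_le zero_lt_one hp
  set T : Set ℝ := {x | ∃ s t : Fin n → ℝ, ∑ i, s i ^ 2 ≤ 1 ∧ ∑ j, t j ^ 2 ≤ 1 ∧
        x = (∫ ω, |∑ e ∈ E, ε e ω * s e.1 * t e.2| ^ p) ^ (1 / p)} with hTdef
  -- every element of T is at most E.card
  have hTbound : ∀ x ∈ T, x ≤ (E.card : ℝ) := by
    rintro x ⟨s, t, hs, ht, rfl⟩
    have habs1 : ∀ (w : Fin n → ℝ), (∑ i, w i ^ 2 ≤ 1) → ∀ i, |w i| ≤ 1 := by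
      intro w hw i
      have h1 : w i ^ 2 ≤ 1 :=
        le_trans (Finset.single_le_sum (f := fun i => w i ^ 2)
          (fun i _ => sq_nonneg _) (Finset.mem_univ i)) hw
      nlinarith [abs_nonneg (w i), sq_abs (w i)]
    have hXb : ∀ ω, |∑ e ∈ E, ε e ω * s e.1 * t e.2| ≤ (E.card : ℝ) := by
      intro ω
      refine (Finset.abs_sum_le_sum_abs _ _).trans ?_
      rw [show ((E.card : ℝ)) = ∑ _e ∈ E, (1:ℝ) by simp]
      refine Finset.sum_le_sum fun e _ => ?_
      rw [abs_mul, abs_mul]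
      rcases hval e ω with h | h <;>
      · rw [h]
        simp only [abs_one, abs_neg, one_mul]
        exact mul_le_one₀ (habs1 s hs e.1) (abs_nonneg _) (habs1 t ht e.2)
    have hXmeas : Measurable fun ω => ∑ e ∈ E, ε e ω * s e.1 * t e.2 :=
      Finset.measurable_sum E fun e _ => ((hmeas e).mul_const _).mul_const _
    have hm : Measurable fun ω => |∑ e ∈ E, ε e ω * s e.1 * t e.2| ^ p :=
      (Real.continuous_rpow_const hp0.le).measurable.comp hXmeas.abs
    have hintp : Integrable (fun ω => |∑ e ∈ E, ε e ω * s e.1 * t e.2| ^ p) ℙ :=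
      stmt11_int_bdd hm (C := (E.card : ℝ) ^ p) fun ω => by
        rw [abs_of_nonneg (Real.rpow_nonneg (abs_nonneg _) p)]
        exact Real.rpow_le_rpow (abs_nonneg _) (hXb ω) hp0.le
    have hIle : ∫ ω, |∑ e ∈ E, ε e ω * s e.1 * t e.2| ^ p ≤ (E.card : ℝ) ^ p := by
      refine (integral_mono hintp (integrable_const _) fun ω =>
        Real.rpow_le_rpow (abs_nonneg _) (hXb ω) hp0.le).trans_eq ?_
      simp [integral_const]
    calc (∫ ω, |∑ e ∈ E, ε e ω * s e.1 * t e.2| ^ p) ^ (1/p)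
        ≤ ((E.card : ℝ) ^ p) ^ (1/p) :=
          Real.rpow_le_rpow (integral_nonneg fun ω =>
            Real.rpow_nonneg (abs_nonneg _) p) hIle (by positivity)
      _ = (E.card : ℝ) := by
          rw [← Real.rpow_mul (Nat.cast_nonneg _), mul_one_div, div_self hp0.ne',
            Real.rpow_one]
  have hTbdd : BddAbove T := ⟨(E.card : ℝ), fun x hx => hTbound x hx⟩
  have hT0 : (0:ℝ) ∈ T := by
    refine ⟨0, 0, by simp, by simp, ?_⟩
    simp only [Pi.zero_apply, mul_zero, Finset.sum_const, smul_zero, abs_zero]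
    rw [Real.zero_rpow hp0.ne', integral_zero, Real.zero_rpow (by positivity)]
  have hsupT : 0 ≤ sSup T := le_csSup hTbdd hT0
  have hS : sSup {y | ∃ s t : Fin n → ℝ, ∑ i, s i ^ 2 ≤ 1 ∧ ∑ j, t j ^ 2 ≤ 1 ∧
      y = |∑ e ∈ I, s e.1 * t e.2|} ≤ 2 * sSup T := by
    refine Real.sSup_le ?_ (by linarith)
    rintro y ⟨s, t, hs, ht, rfl⟩
    set u : Fin n → ℝ := fun i => |s i| with hudef
    set v : Fin n → ℝ := fun j => |t j| with hvdef
    have hx : (∫ ω, |∑ e ∈ E, ε e ω * u e.1 * v e.2| ^ p) ^ (1/p) ∈ T :=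
      ⟨u, v, by simpa [hudef, sq_abs] using hs, by simpa [hvdef, sq_abs] using ht, rfl⟩
    have hkey := stmt11_key E I hIE p hp hI ε hmeas hindep hval hsym u v
      (fun i => abs_nonneg _) (fun j => abs_nonneg _)
    have hyc : |∑ e ∈ I, s e.1 * t e.2| ≤ ∑ e ∈ I, u e.1 * v e.2 :=
      (Finset.abs_sum_le_sum_abs _ _).trans
        (le_of_eq (Finset.sum_congr rfl fun e _ => abs_mul _ _))
    have h5 : (∫ ω, |∑ e ∈ E, ε e ω * u e.1 * v e.2| ^ p) ^ (1/p) ≤ sSup T :=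
      le_csSup hTbdd hx
    linarith
  linarith
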